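/- For any real a, the function H(x,y) = (x² + 2y²)(2x² + y²)^(a−1) is a first integral of the planar system ẋ = 2(a+3)x²y + 4ay³, ẏ = −4ax³ − 2(4a−3)xy², on the set where 2x² + y² > 0. -/

import Mathlib

theorem stmt6 (a : ℝ) : ∀ x y : ℝ, 2 * x ^ 2 + y ^ 2 > 0 →
    deriv (fun x' => (x' ^ 2 + 2 * y ^ 2) * (2 * x' ^ 2 + y ^ 2) ^ (a - 1)) x *
        (2 * (a + 3) * x ^ 2 * y + 4 * a * y ^ 3) +
      deriv (fun y' => (x ^ 2 + 2 * y' ^ 2) * (2 * x ^ 2 + y' ^ 2) ^ (a - 1)) y *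
        (-4 * a * x ^ 3 - 2 * (4 * a - 3) * x * y ^ 2) = 0 := by
  intro x y hu
  set u : ℝ := 2 * x ^ 2 + y ^ 2 with hudef
  have hune : u ≠ 0 := ne_of_gt hu
  have h1 : HasDerivAt (fun x' => (x' ^ 2 + 2 * y ^ 2) * (2 * x' ^ 2 + y ^ 2) ^ (a - 1))
      ((2 * x) * u ^ (a - 1) + (x ^ 2 + 2 * y ^ 2) * ((4 * x) * (a - 1) * u ^ (a - 1 - 1))) x := by
    have hb : HasDerivAt (fun x' : ℝ => 2 * x' ^ 2 + y ^ 2) (4 * x) x := by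
      have := ((hasDerivAt_pow 2 x).const_mul 2).add_const (y ^ 2)
      simpa using this.congr_deriv (by ring)
    have hp := hb.rpow_const (p := a - 1) (Or.inl hune)
    have hl : HasDerivAt (fun x' : ℝ => x' ^ 2 + 2 * y ^ 2) (2 * x) x := by
      have := (hasDerivAt_pow 2 x).add_const (2 * y ^ 2)
      simpa using this.congr_deriv (by ring)
    exact hl.mul hp
  have h2 : HasDerivAt (fun y' => (x ^ 2 + 2 * y' ^ 2) * (2 * x ^ 2 + y' ^ 2) ^ (a - 1))
      ((4 * y) * u ^ (a - 1) + (x ^ 2 + 2 * y ^ 2) * ((2 * y) * (a - 1) * u ^ (a - 1 - 1))) y := by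
    have hb : HasDerivAt (fun y' : ℝ => 2 * x ^ 2 + y' ^ 2) (2 * y) y := by
      have := (hasDerivAt_pow 2 y).const_add (2 * x ^ 2)
      simpa using this.congr_deriv (by ring)
    have hp := hb.rpow_const (p := a - 1) (Or.inl hune)
    have hl : HasDerivAt (fun y' : ℝ => x ^ 2 + 2 * y' ^ 2) (4 * y) y := by
      have := ((hasDerivAt_pow 2 y).const_mul 2).const_add (x ^ 2)
      simpa using this.congr_deriv (by ring)
    exact hl.mul hp
  rw [h1.deriv, h2.deriv]
  have key : u ^ (a - 1) = u * u ^ (a - 1 - 1) := by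
    rw [show a - 1 = 1 + (a - 1 - 1) by ring, Real.rpow_add hu, Real.rpow_one]
    ring_nf
  rw [key]
  rw [hudef]
  ring_nf
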